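/- For X uniform on the unit circle and any random variable K taking at most 2 values (possibly depending on X and independent auxiliary randomness), E[‖X - E[X|K]‖²] ≥ 1 - 4/π². -/

import Mathlib

open Real MeasureTheory
open scoped RealInnerProductSpace


noncomputable def circlePoint (θ : ℝ) : EuclideanSpace ℝ (Fin 2) :=
  (WithLp.equiv 2 (Fin 2 → ℝ)).symm ![Real.cos θ, Real.sin θ]

lemma circlePoint_apply (θ : ℝ) (i : Fin 2) :
    circlePoint θ i = ![Real.cos θ, Real.sin θ] i := rfl

lemma norm_circlePoint (θ : ℝ) : ‖circlePoint θ‖ = 1 := by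
  rw [EuclideanSpace.norm_eq]
  rw [show ∑ i, ‖circlePoint θ i‖ ^ 2 = Real.cos θ ^ 2 + Real.sin θ ^ 2 by
    simp [circlePoint_apply, Fin.sum_univ_two, Real.norm_eq_abs, sq_abs]]
  rw [Real.cos_sq_add_sin_sq]; exact Real.sqrt_one

lemma inner_circlePoint (φ θ : ℝ) :
    ⟪circlePoint φ, circlePoint θ⟫ = Real.cos (θ - φ) := by
  rw [PiLp.inner_apply]
  simp [circlePoint_apply, Fin.sum_univ_two, Real.cos_sub]

lemma continuous_circlePoint : Continuous circlePoint := by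
  unfold circlePoint
  exact (EuclideanSpace.equiv (Fin 2) ℝ).symm.continuous.comp
    (continuous_pi fun i => by
      fin_cases i <;>
        simp only [Matrix.cons_val_zero, Matrix.cons_val_one, Matrix.head_cons, Fin.mk_zero,
          Fin.mk_one] <;> [exact Real.continuous_cos; exact Real.continuous_sin])

lemma exists_angle (u : EuclideanSpace ℝ (Fin 2)) (hu : ‖u‖ = 1) :
    ∃ φ : ℝ, u = circlePoint φ := by
  have h : u 0 ^ 2 + u 1 ^ 2 = 1 := by
    have := hu
    rw [EuclideanSpace.norm_eq] at this
    have h2 : √(u 0 ^ 2 + u 1 ^ 2) = 1 := by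
      rw [← this]; congr 1
      rw [Fin.sum_univ_two]; simp [Real.norm_eq_abs, sq_abs]
    nlinarith [Real.sq_sqrt (by positivity : (0:ℝ) ≤ u 0 ^ 2 + u 1 ^ 2)]
  set z : ℂ := ⟨u 0, u 1⟩ with hz
  have habs : ‖z‖ = 1 := by
    rw [Complex.norm_def, Complex.normSq_mk, ← Real.sqrt_one]
    congr 1; nlinarith
  have hz0 : z ≠ 0 := by
    intro h0; rw [h0] at habs; simp at habs
  refine ⟨Complex.arg z, ?_⟩
  have hc : Real.cos (Complex.arg z) = u 0 := by
    rw [Complex.cos_arg hz0, habs]; simp [hz]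
  have hs : Real.sin (Complex.arg z) = u 1 := by
    rw [Complex.sin_arg, habs]; simp [hz]
  ext i
  fin_cases i <;> simp [circlePoint_apply, hc, hs]

lemma sin_sq_le_four_mul {p : ℝ} (hp0 : 0 ≤ p) (hp1 : p ≤ 1) :
    Real.sin (π * p) ^ 2 ≤ 4 * p * (1 - p) := by
  set y : ℝ := p - 1/2 with hy
  have hyabs : |y| ≤ 1/2 := abs_le.mpr ⟨by simp [hy]; linarith, by simp [hy]; linarith⟩
  have h1 : Real.sin (π * p) ^ 2 = Real.cos (π * y) ^ 2 := by
    have h : π * p = π * y + π / 2 := by rw [hy]; ring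
    rw [h, Real.sin_add_pi_div_two]
  have h2 : (4:ℝ) * p * (1 - p) = 1 - 4 * y ^ 2 := by rw [hy]; ring
  rw [h1, h2]
  have hcos : Real.cos (π * y) ^ 2 = 1 - Real.sin (π * y) ^ 2 := by
    have := Real.sin_sq_add_cos_sq (π * y); linarith
  rw [hcos]
  have hpiy : π * |y| ≤ π / 2 := by
    have := mul_le_mul_of_nonneg_left hyabs Real.pi_pos.le; linarith
  have hjordan : 2 * |y| ≤ Real.sin (π * |y|) := by
    have h := Real.mul_le_sin (x := π * |y|) (by positivity) hpiy
    calc 2 * |y| = 2 / π * (π * |y|) := by field_simp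
    _ ≤ Real.sin (π * |y|) := h
  have habs : Real.sin (π * |y|) = |Real.sin (π * y)| := by
    have hs : Real.sin (π * |y|) = |Real.sin (π * y)| ∨
        Real.sin (π * |y|) = Real.sin (π * y) ∨ Real.sin (π * |y|) = -Real.sin (π * y) := by
      rcases abs_cases y with ⟨h, _⟩ | ⟨h, _⟩
      · right; left; rw [h]
      · right; right; rw [h]; rw [show π * -y = -(π * y) by ring, Real.sin_neg]
    have hnn : 0 ≤ Real.sin (π * |y|) :=
      Real.sin_nonneg_of_nonneg_of_le_pi (by positivity) (by nlinarith [Real.pi_pos])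
    rcases hs with h | h | h
    · exact h
    · rw [h, abs_of_nonneg (h ▸ hnn)]
    · rw [h, abs_of_nonpos (by linarith [h ▸ hnn])]
  rw [habs] at hjordan
  nlinarith [sq_abs (Real.sin (π * y)), sq_abs y, abs_nonneg (Real.sin (π*y)), abs_nonneg y]

lemma cont_max_cos (c : ℝ) : Continuous fun t => max (Real.cos t - c) 0 :=
  (Real.continuous_cos.sub continuous_const).max continuous_const

lemma max_cos_integral {p : ℝ} (hp0 : 0 ≤ p) (hp1 : p ≤ 1) :
    ∫ t in (-π)..π, max (Real.cos t - Real.cos (π*p)) 0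
      = 2 * Real.sin (π*p) - 2*(π*p)*Real.cos (π*p) := by
  set c := Real.cos (π*p) with hc
  have hcont := cont_max_cos c
  have hii : ∀ a b : ℝ, IntervalIntegrable (fun t => max (Real.cos t - c) 0) volume a b :=
    fun a b => hcont.intervalIntegrable a b
  have hle1 : -π ≤ -(π*p) := by nlinarith [Real.pi_pos]
  have hle2 : -(π*p) ≤ π*p := by nlinarith [Real.pi_pos]
  have hle3 : π*p ≤ π := by nlinarith [Real.pi_pos]
  have hsplit : ∫ t in (-π)..π, max (Real.cos t - c) 0
      = (∫ t in (-π)..(-(π*p)), max (Real.cos t - c) 0)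
        + (∫ t in (-(π*p))..(π*p), max (Real.cos t - c) 0)
        + (∫ t in (π*p)..π, max (Real.cos t - c) 0) := by
    rw [intervalIntegral.integral_add_adjacent_intervals (hii _ _) (hii _ _),
      intervalIntegral.integral_add_adjacent_intervals (hii _ _) (hii _ _)]
  have hzero : ∀ t ∈ Set.uIcc (π*p) π, max (Real.cos t - c) 0 = (0:ℝ) := by
    intro t ht
    rw [Set.uIcc_of_le hle3] at ht
    have : Real.cos t ≤ c := Real.cos_le_cos_of_nonneg_of_le_pi (by positivity) ht.2 ht.1
    simp [max_eq_right, sub_nonpos.mpr this]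
  have hzero' : ∀ t ∈ Set.uIcc (-π) (-(π*p)), max (Real.cos t - c) 0 = (0:ℝ) := by
    intro t ht
    rw [Set.uIcc_of_le hle1] at ht
    have h2 : Real.cos (-t) ≤ c :=
      Real.cos_le_cos_of_nonneg_of_le_pi (by positivity) (by linarith [ht.1]) (by linarith [ht.2])
    rw [Real.cos_neg] at h2
    simp [max_eq_right, sub_nonpos.mpr h2]
  have hmid : ∀ t ∈ Set.uIcc (-(π*p)) (π*p), max (Real.cos t - c) 0 = Real.cos t - c := by
    intro t ht
    rw [Set.uIcc_of_le hle2] at ht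
    have habs : |t| ≤ π*p := abs_le.mpr ⟨by linarith [ht.1], ht.2⟩
    have : c ≤ Real.cos |t| :=
      Real.cos_le_cos_of_nonneg_of_le_pi (abs_nonneg t) hle3 habs
    rw [Real.cos_abs] at this
    exact max_eq_left (by linarith)
  rw [hsplit, intervalIntegral.integral_congr hzero, intervalIntegral.integral_congr hzero',
    intervalIntegral.integral_congr hmid]
  simp only [intervalIntegral.integral_zero]
  rw [intervalIntegral.integral_sub (Real.continuous_cos.intervalIntegrable _ _)
    (intervalIntegrable_const)]
  rw [integral_cos, intervalIntegral.integral_const]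
  simp [Real.sin_neg]
  ring

section Meas
variable {Ω : Type*} [MeasurableSpace Ω] (μ : Measure Ω) [IsProbabilityMeasure μ]
  (X : Ω → EuclideanSpace ℝ (Fin 2)) (hX : Measurable X)
  (hXlaw : Measure.map X μ
      = Measure.map circlePoint
          ((ENNReal.ofReal (2 * π))⁻¹ • volume.restrict (Set.Ico (0 : ℝ) (2 * π))))

include hX hXlaw

lemma integral_comp_circle (g : EuclideanSpace ℝ (Fin 2) → ℝ) (hg : Continuous g) :
    ∫ ω, g (X ω) ∂μ = (2*π)⁻¹ * ∫ θ in Set.Ico (0:ℝ) (2*π), g (circlePoint θ) := by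
  rw [← integral_map hX.aemeasurable hg.aestronglyMeasurable, hXlaw,
    integral_map continuous_circlePoint.measurable.aemeasurable hg.aestronglyMeasurable,
    integral_smul_measure, ENNReal.toReal_inv, ENNReal.toReal_ofReal (by positivity)]
  simp [smul_eq_mul]

lemma ae_norm_X : ∀ᵐ ω ∂μ, ‖X ω‖ = 1 := by
  have hs : MeasurableSet {v : EuclideanSpace ℝ (Fin 2) | ‖v‖ = 1}ᶜ :=
    (continuous_norm.measurable (measurableSet_singleton (1:ℝ))).compl
  have h0 : μ (X ⁻¹' {v | ‖v‖ = 1}ᶜ) = 0 := by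
    rw [← Measure.map_apply hX hs, hXlaw,
      Measure.map_apply continuous_circlePoint.measurable hs]
    have : circlePoint ⁻¹' {v | ‖v‖ = 1}ᶜ = ∅ := by
      ext θ; simp [norm_circlePoint]
    rw [this]; simp
  exact measure_mono_null (fun ω hω => hω) h0 |> fun h => by
    rw [ae_iff]; exact measure_mono_null (fun ω hω => hω) h0

lemma integrable_X : Integrable X μ := by
  refine Integrable.mono' (integrable_const (1:ℝ)) hX.aestronglyMeasurable ?_
  filter_upwards [ae_norm_X μ X hX hXlaw] with ω h using le_of_eq h

lemma key_arc_bound {A : Set Ω} (hA : MeasurableSet A) :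
    ‖∫ ω in A, X ω ∂μ‖ ≤ Real.sin (π * (μ A).toReal) / π := by
  have hnorm1 := ae_norm_X μ X hX hXlaw
  have hint := integrable_X μ X hX hXlaw
  set p := (μ A).toReal with hp
  have hp0 : 0 ≤ p := ENNReal.toReal_nonneg
  have hp1 : p ≤ 1 := by
    rw [hp]
    exact ENNReal.toReal_le_of_le_ofReal zero_le_one (by simpa using prob_le_one (μ := μ) (s := A))
  have hsin_nonneg : 0 ≤ Real.sin (π * p) :=
    Real.sin_nonneg_of_nonneg_of_le_pi (by positivity) (by nlinarith [Real.pi_pos])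
  set v := ∫ ω in A, X ω ∂μ with hv
  rcases eq_or_ne v 0 with h0 | h0
  · rw [h0]; simp; positivity
  · set u := ‖v‖⁻¹ • v with hu
    have hvn : ‖v‖ ≠ 0 := fun h => h0 (norm_eq_zero.mp h)
    have hun : ‖u‖ = 1 := by
      rw [hu, norm_smul, norm_inv, norm_norm, inv_mul_cancel₀ hvn]
    obtain ⟨φ, hφ⟩ := exists_angle u hun
    set c := Real.cos (π * p) with hc
    have hinner : ∀ ω, ⟪u, X ω⟫ = Real.cos (0 : ℝ) * 0 + ⟪u, X ω⟫ := by intro ω; ring_nf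
    -- ‖v‖ = ∫_A ⟪u, X⟫
    have h1 : ‖v‖ = ∫ ω in A, ⟪u, X ω⟫ ∂μ := by
      rw [integral_inner (hint.restrict), hu, real_inner_smul_left,
        real_inner_self_eq_norm_sq]
      field_simp
    -- integrability pieces
    have hgcont : Continuous fun w : EuclideanSpace ℝ (Fin 2) => max (⟪u, w⟫ - c) 0 :=
      ((continuous_const.inner continuous_id).sub continuous_const).max continuous_const
    have hinner_int : Integrable (fun ω => ⟪u, X ω⟫) μ := by
      refine Integrable.mono' (integrable_const (1:ℝ))
        ((continuous_const.inner continuous_id).measurable.comp hX).aestronglyMeasurable ?_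
      filter_upwards [hnorm1] with ω h
      calc ‖⟪u, X ω⟫‖ ≤ ‖u‖ * ‖X ω‖ := norm_inner_le_norm _ _
        _ = 1 := by rw [hun, h]; ring
    have hmax_int : Integrable (fun ω => max (⟪u, X ω⟫ - c) 0) μ := by
      refine Integrable.mono' (integrable_const (1 + |c|))
        (hgcont.measurable.comp hX).aestronglyMeasurable ?_
      filter_upwards [hnorm1] with ω h
      have hb : ‖⟪u, X ω⟫‖ ≤ 1 := by
        calc ‖⟪u, X ω⟫‖ ≤ ‖u‖ * ‖X ω‖ := norm_inner_le_norm _ _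
          _ = 1 := by rw [hun, h]; ring
      rw [Real.norm_eq_abs] at hb ⊢
      rw [abs_of_nonneg (le_max_right _ _)]
      have h1 := (abs_le.mp hb).2
      have h2 : -c ≤ |c| := neg_le_abs c
      exact max_le (by linarith) (by positivity)
    -- chain of bounds
    have step1 : ∫ ω in A, ⟪u, X ω⟫ ∂μ ≤ ∫ ω in A, (max (⟪u, X ω⟫ - c) 0 + c) ∂μ := by
      refine integral_mono hinner_int.restrict ((hmax_int.restrict (s := A)).add (integrable_const c)) ?_
      intro ω
      have := le_max_left (⟪u, X ω⟫ - c) 0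
      simp only [Pi.add_apply]
      linarith
    have step2 : ∫ ω in A, (max (⟪u, X ω⟫ - c) 0 + c) ∂μ
        = (∫ ω in A, max (⟪u, X ω⟫ - c) 0 ∂μ) + c * p := by
      rw [integral_add (hmax_int.restrict (s := A)) (integrable_const c), setIntegral_const]
      simp [hp, smul_eq_mul, mul_comm, measureReal_def]
    have step3 : ∫ ω in A, max (⟪u, X ω⟫ - c) 0 ∂μ ≤ ∫ ω, max (⟪u, X ω⟫ - c) 0 ∂μ :=
      setIntegral_le_integral hmax_int
        (Filter.Eventually.of_forall fun ω => le_max_right _ _)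
    have hcomp : ∫ ω, max (⟪u, X ω⟫ - c) 0 ∂μ
        = (2*π)⁻¹ * ∫ θ in Set.Ico (0:ℝ) (2*π), max (Real.cos (θ - φ) - c) 0 := by
      rw [integral_comp_circle μ X hX hXlaw _ hgcont]
      congr 1
      refine setIntegral_congr_fun measurableSet_Ico (fun θ _ => ?_)
      rw [hφ, inner_circlePoint]
    have hIco : ∫ θ in Set.Ico (0:ℝ) (2*π), max (Real.cos (θ - φ) - c) 0
        = ∫ θ in (0:ℝ)..(2*π), max (Real.cos (θ - φ) - c) 0 := by
      rw [MeasureTheory.integral_Ico_eq_integral_Ioo, intervalIntegral.integral_of_le (by positivity), MeasureTheory.integral_Ioc_eq_integral_Ioo]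
    have hper : Function.Periodic (fun θ => max (Real.cos (θ - φ) - c) 0) (2*π) := by
      intro θ
      simp only
      rw [show θ + 2*π - φ = (θ - φ) + 2*π by ring, Real.cos_add_two_pi]
    have hshift : ∫ θ in (0:ℝ)..(2*π), max (Real.cos (θ - φ) - c) 0
        = ∫ t in (-π)..π, max (Real.cos t - c) 0 := by
      have h := hper.intervalIntegral_add_eq 0 (φ - π)
      simp only [zero_add] at h
      rw [h, show φ - π + 2*π = φ + π by ring]
      have hsub := intervalIntegral.integral_comp_sub_right
        (a := φ - π) (b := φ + π) (fun t => max (Real.cos t - c) 0) φ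
      rw [hsub, show φ - π - φ = -π by ring, show φ + π - φ = π by ring]
    have hval : ∫ t in (-π)..π, max (Real.cos t - c) 0
        = 2 * Real.sin (π*p) - 2*(π*p)*c := by
      rw [hc]; exact max_cos_integral hp0 hp1
    rw [h1]
    calc ∫ ω in A, ⟪u, X ω⟫ ∂μ
        ≤ (∫ ω, max (⟪u, X ω⟫ - c) 0 ∂μ) + c * p := by
          exact step1.trans (step2.le.trans (by linarith))
      _ = (2*π)⁻¹ * (2 * Real.sin (π*p) - 2*(π*p)*c) + c * p := by
          rw [hcomp, hIco, hshift, hval]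
      _ = Real.sin (π * p) / π := by
          have hπ : (π:ℝ) ≠ 0 := Real.pi_ne_zero
          field_simp
          ring

-- integrability of ‖X - a‖² on a set
lemma integrableOn_normsq (a : EuclideanSpace ℝ (Fin 2)) (A : Set Ω) :
    IntegrableOn (fun ω => ‖X ω - a‖^2) A μ := by
  refine Integrable.mono' (integrable_const ((1 + ‖a‖)^2))
    (((hX.sub measurable_const).norm.pow measurable_const).aestronglyMeasurable) ?_
  filter_upwards [ae_restrict_of_ae (ae_norm_X μ X hX hXlaw)] with ω h
  have h1 : ‖X ω - a‖ ≤ 1 + ‖a‖ := by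
    calc ‖X ω - a‖ ≤ ‖X ω‖ + ‖a‖ := norm_sub_le _ _
      _ = 1 + ‖a‖ := by rw [h]
  rw [Real.norm_eq_abs, abs_of_nonneg (by positivity)]
  have := norm_nonneg (X ω - a)
  nlinarith

lemma setint_lower {A : Set Ω} (hA : MeasurableSet A) {Y : Ω → EuclideanSpace ℝ (Fin 2)}
    (hconst : ∀ ω ∈ A, ∀ ω' ∈ A, Y ω = Y ω') :
    (μ A).toReal - ‖∫ ω in A, X ω ∂μ‖^2 / (μ A).toReal
      ≤ ∫ ω in A, ‖X ω - Y ω‖^2 ∂μ := by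
  have hnorm1 := ae_norm_X μ X hX hXlaw
  have hint := integrable_X μ X hX hXlaw
  rcases A.eq_empty_or_nonempty with rfl | ⟨ω₀, hω₀⟩
  · simp
  set a := Y ω₀ with ha
  have hcong : ∫ ω in A, ‖X ω - Y ω‖^2 ∂μ = ∫ ω in A, ‖X ω - a‖^2 ∂μ :=
    setIntegral_congr_fun hA (fun ω hω => by rw [hconst ω hω ω₀ hω₀])
  rw [hcong]
  rcases eq_or_ne (μ A) 0 with hz | hz
  · have hres : μ.restrict A = 0 := Measure.restrict_eq_zero.mpr hz
    simp [hres, hz]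
  set p := (μ A).toReal with hp
  set v := ∫ ω in A, X ω ∂μ with hv
  have hppos : 0 < p := by
    rw [hp]
    exact ENNReal.toReal_pos hz (measure_ne_top μ A)
  -- expand the square
  have hexp : ∀ ω, ‖X ω - a‖^2 = ‖X ω‖^2 - 2 * ⟪a, X ω⟫ + ‖a‖^2 := by
    intro ω
    rw [norm_sub_sq_real, real_inner_comm]
  have hint1 : IntegrableOn (fun ω => ‖X ω‖^2) A μ := by
    have := integrableOn_normsq μ X hX hXlaw 0 A
    simpa using this
  have hint2 : IntegrableOn (fun ω => ⟪a, X ω⟫) A μ :=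
    ((continuous_const.inner continuous_id).measurable.comp hX).aestronglyMeasurable
      |> fun hm => Integrable.mono' (integrable_const ‖a‖) hm (by
        filter_upwards [ae_restrict_of_ae hnorm1] with ω h
        calc ‖⟪a, X ω⟫‖ ≤ ‖a‖ * ‖X ω‖ := norm_inner_le_norm _ _
          _ = ‖a‖ := by rw [h]; ring)
  have hsq1 : ∫ ω in A, ‖X ω‖^2 ∂μ = p := by
    have : ∫ ω in A, ‖X ω‖^2 ∂μ = ∫ ω in A, (1:ℝ) ∂μ := by
      refine integral_congr_ae ?_
      filter_upwards [ae_restrict_of_ae hnorm1] with ω h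
      rw [h]; norm_num
    rw [this, setIntegral_const, smul_eq_mul, mul_one]; rfl
  have hinner : ∫ ω in A, ⟪a, X ω⟫ ∂μ = ⟪a, v⟫ := by
    rw [hv, integral_inner hint.restrict]
  have hval : ∫ ω in A, ‖X ω - a‖^2 ∂μ = p - 2 * ⟪a, v⟫ + ‖a‖^2 * p := by
    have h1 : ∫ ω in A, ‖X ω - a‖^2 ∂μ
        = ∫ ω in A, (‖X ω‖^2 - 2 * ⟪a, X ω⟫ + ‖a‖^2) ∂μ :=
      integral_congr_ae (Filter.Eventually.of_forall fun ω => hexp ω)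
    have hIc : Integrable (fun ω => 2 * ⟪a, X ω⟫) (μ.restrict A) := hint2.const_mul 2
    have hIsub : Integrable (fun ω => ‖X ω‖^2 - 2 * ⟪a, X ω⟫) (μ.restrict A) := hint1.sub hIc
    rw [h1, integral_add hIsub (integrable_const _),
      integral_sub hint1 hIc, integral_const_mul, hsq1, hinner,
      setIntegral_const, smul_eq_mul, measureReal_def, ← hp]
    ring
  rw [hval]
  have hcs : ⟪a, v⟫ ≤ ‖a‖ * ‖v‖ := real_inner_le_norm a v
  rw [sub_le_iff_le_add', ← sub_le_iff_le_add]
  have key : 2 * ⟪a, v⟫ - ‖a‖^2 * p ≤ ‖v‖^2 / p := by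
    rw [le_div_iff₀ hppos]
    nlinarith [sq_nonneg (p * ‖a‖ - ‖v‖), norm_nonneg a, norm_nonneg v]
  linarith
end Meas

set_option maxHeartbeats 1000000 in
theorem stmt_12 {Ω : Type*} [MeasurableSpace Ω]
    (μ : Measure Ω) [IsProbabilityMeasure μ]
    (X : Ω → EuclideanSpace ℝ (Fin 2)) (hX : Measurable X)
    (hXlaw : Measure.map X μ
      = Measure.map circlePoint
          ((ENNReal.ofReal (2 * π))⁻¹ • volume.restrict (Set.Ico (0 : ℝ) (2 * π))))
    (K : Ω → ℕ) (hK : Measurable K) (hK2 : ∀ ω, K ω < 2) :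
    ∫ ω, ‖X ω - (μ[X | MeasurableSpace.comap K ⊤]) ω‖ ^ 2 ∂μ ≥ 1 - 4 / π ^ 2 := by
  set Y := μ[X | MeasurableSpace.comap K ⊤] with hY_def
  have hnorm1 := ae_norm_X μ X hX hXlaw
  -- Y is constant on atoms of K
  have hYm : StronglyMeasurable[MeasurableSpace.comap K ⊤] Y := stronglyMeasurable_condExp
  have hconstat : ∀ ω ω', K ω = K ω' → Y ω = Y ω' := by
    intro ω ω' hKe
    have hpre : MeasurableSet[MeasurableSpace.comap K ⊤] (Y ⁻¹' {Y ω}) :=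
      hYm.measurable (measurableSet_singleton _)
    obtain ⟨S, -, hS⟩ := hpre
    have hωmem : ω ∈ K ⁻¹' S := by rw [hS]; exact rfl
    have hω'mem : ω' ∈ K ⁻¹' S := by
      simp only [Set.mem_preimage] at hωmem ⊢; rwa [← hKe]
    rw [hS] at hω'mem
    simp only [Set.mem_preimage, Set.mem_singleton_iff] at hω'mem
    exact hω'mem.symm
  -- the two atoms
  set A : Set Ω := K ⁻¹' {0} with hA_def
  have hA : MeasurableSet A := hK (measurableSet_singleton 0)
  have hAc : Aᶜ = K ⁻¹' {1} := by
    ext ω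
    simp only [hA_def, Set.mem_compl_iff, Set.mem_preimage, Set.mem_singleton_iff]
    have := hK2 ω
    omega
  set p := (μ A).toReal with hp_def
  set q := (μ Aᶜ).toReal with hq_def
  have hp0 : 0 ≤ p := ENNReal.toReal_nonneg
  have hq0 : 0 ≤ q := ENNReal.toReal_nonneg
  have hpq : p + q = 1 := by
    rw [hp_def, hq_def, ← ENNReal.toReal_add (measure_ne_top μ _) (measure_ne_top μ _),
      measure_add_measure_compl hA]
    simp
  have hp1 : p ≤ 1 := by linarith
  -- integrability of the squared distance
  have hF : Integrable (fun ω => ‖X ω - Y ω‖^2) μ := by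
    rw [← integrableOn_univ, ← Set.union_compl_self A]
    apply IntegrableOn.union
    · rcases Set.eq_empty_or_nonempty A with he | ⟨ω₀, hω₀⟩
      · rw [he]; exact integrableOn_empty
      refine (integrableOn_normsq μ X hX hXlaw (Y ω₀) A).congr_fun ?_ hA
      intro ω hω
      have : Y ω = Y ω₀ := hconstat ω ω₀ (by
        simp only [hA_def, Set.mem_preimage, Set.mem_singleton_iff] at hω hω₀
        rw [hω, hω₀])
      show ‖X ω - Y ω₀‖^2 = ‖X ω - Y ω‖^2
      rw [this]
    · rcases Set.eq_empty_or_nonempty Aᶜ with he | ⟨ω₀, hω₀⟩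
      · rw [he]; exact integrableOn_empty
      refine (integrableOn_normsq μ X hX hXlaw (Y ω₀) Aᶜ).congr_fun ?_ hA.compl
      intro ω hω
      have : Y ω = Y ω₀ := hconstat ω ω₀ (by
        rw [hAc] at hω hω₀
        simp only [Set.mem_preimage, Set.mem_singleton_iff] at hω hω₀
        rw [hω, hω₀])
      show ‖X ω - Y ω₀‖^2 = ‖X ω - Y ω‖^2
      rw [this]
  -- split the integral
  have hsplit : ∫ ω, ‖X ω - Y ω‖^2 ∂μ
      = (∫ ω in A, ‖X ω - Y ω‖^2 ∂μ) + ∫ ω in Aᶜ, ‖X ω - Y ω‖^2 ∂μ :=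
    (integral_add_compl hA hF).symm
  -- lower bounds on each piece
  have hconstA : ∀ ω ∈ A, ∀ ω' ∈ A, Y ω = Y ω' := by
    intro ω hω ω' hω'
    refine hconstat ω ω' ?_
    simp only [hA_def, Set.mem_preimage, Set.mem_singleton_iff] at hω hω'
    rw [hω, hω']
  have hconstAc : ∀ ω ∈ Aᶜ, ∀ ω' ∈ Aᶜ, Y ω = Y ω' := by
    intro ω hω ω' hω'
    refine hconstat ω ω' ?_
    rw [hAc] at hω hω'
    simp only [Set.mem_preimage, Set.mem_singleton_iff] at hω hω'
    rw [hω, hω']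
  have hlow1 := setint_lower μ X hX hXlaw hA hconstA
  have hlow2 := setint_lower μ X hX hXlaw hA.compl hconstAc
  set v := ∫ ω in A, X ω ∂μ with hv_def
  set w := ∫ ω in Aᶜ, X ω ∂μ with hw_def
  have hkey1 : ‖v‖ ≤ Real.sin (π * p) / π := key_arc_bound μ X hX hXlaw hA
  have hkey2 : ‖w‖ ≤ Real.sin (π * q) / π := key_arc_bound μ X hX hXlaw hA.compl
  have hsinq : Real.sin (π * q) = Real.sin (π * p) := by
    have hq1 : q = 1 - p := by linarith
    rw [hq1, show π * (1 - p) = π - π * p by ring, Real.sin_pi_sub]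
  rw [hsinq] at hkey2
  set s := Real.sin (π * p) with hs_def
  have h1 : p - ‖v‖^2 / p ≤ ∫ ω in A, ‖X ω - Y ω‖^2 ∂μ := hlow1
  have h2 : q - ‖w‖^2 / q ≤ ∫ ω in Aᶜ, ‖X ω - Y ω‖^2 ∂μ := hlow2
  clear_value v w p q s
  have hs0 : 0 ≤ s := by
    rw [hs_def]
    exact Real.sin_nonneg_of_nonneg_of_le_pi (mul_nonneg Real.pi_pos.le hp0)
      (by nlinarith [Real.pi_pos])
  have hs4 : s^2 ≤ 4 * p * (1 - p) := by rw [hs_def]; exact sin_sq_le_four_mul hp0 hp1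
  have hπ := Real.pi_pos
  -- main bound on the sum of the two correction terms
  have hT : ‖v‖^2 / p + ‖w‖^2 / q ≤ 4 / π^2 := by
    have hv1 : ‖v‖ * π ≤ s := (le_div_iff₀ hπ).mp hkey1
    have hw1 : ‖w‖ * π ≤ s := (le_div_iff₀ hπ).mp hkey2
    have hv2 : ‖v‖^2 * π^2 ≤ s^2 := by
      nlinarith [mul_self_le_mul_self (by positivity : (0:ℝ) ≤ ‖v‖ * π) hv1]
    have hw2 : ‖w‖^2 * π^2 ≤ s^2 := by
      nlinarith [mul_self_le_mul_self (by positivity : (0:ℝ) ≤ ‖w‖ * π) hw1]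
    rcases eq_or_lt_of_le hp0 with hpz | hppos
    · -- p = 0 : both terms vanish
      have hq1 : q = 1 := by linarith
      have hsz : s = 0 := by rw [hs_def, ← hpz]; simp
      have hvz : ‖v‖ = 0 := le_antisymm (by nlinarith [norm_nonneg v]) (norm_nonneg v)
      have hwz : ‖w‖ = 0 := le_antisymm (by nlinarith [norm_nonneg w]) (norm_nonneg w)
      rw [hvz, hwz]
      simp
      positivity
    rcases eq_or_lt_of_le hq0 with hqz | hqpos
    · have hp1' : p = 1 := by linarith
      have hsz : s = 0 := by rw [hs_def, hp1']; simp
      have hvz : ‖v‖ = 0 := le_antisymm (by nlinarith [norm_nonneg v]) (norm_nonneg v)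
      have hwz : ‖w‖ = 0 := le_antisymm (by nlinarith [norm_nonneg w]) (norm_nonneg w)
      rw [hvz, hwz]
      simp
      positivity
    have e1 : ‖v‖^2 / p ≤ (s^2/π^2) / p := by
      gcongr
      exact (le_div_iff₀ (by positivity)).mpr hv2
    have e2 : ‖w‖^2 / q ≤ (s^2/π^2) / q := by
      gcongr
      exact (le_div_iff₀ (by positivity)).mpr hw2
    have e3 : (s^2/π^2) / p + (s^2/π^2) / q ≤ 4 / π^2 := by
      rw [div_add_div _ _ (ne_of_gt hppos) (ne_of_gt hqpos),
        div_le_div_iff₀ (by positivity) (by positivity)]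
      have hq1 : q = 1 - p := by linarith
      rw [hq1]
      have hexp : s ^ 2 / π ^ 2 * π ^ 2 = s ^ 2 := by field_simp
      nlinarith [sq_nonneg s, sq_nonneg π]
    linarith
  rw [ge_iff_le, hsplit]
  linarith
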